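/- Let 𝔤 be a Lie algebra over ℂ admitting a vector space direct sum decomposition 𝔤 = 𝔭⁺ ⊕ 𝔨 ⊕ 𝔭⁻, where 𝔨, 𝔭⁺, 𝔭⁻ are Lie subalgebras with [𝔨,𝔭⁺] ⊆ 𝔭⁺ and [𝔨,𝔭⁻] ⊆ 𝔭⁻ (so that 𝔮 := 𝔨 ⊕ 𝔭⁻ is a Lie subalgebra). Let V be a 𝔤-module such that every 𝔤-submodule of V has a 𝔤-submodule complement, and let v₀ ∈ V be a nonzero vector with the following properties: (i) V is generated by v₀ as a 𝔤-module; (ii) the 𝔨-submodule τ of V generated by v₀ is irreducible as a 𝔨-module; (iii) 𝔭⁻·v₀ = 0; (iv) viewing τ as a 𝔮-module on which 𝔭⁻ acts by zero, the induced 𝔤-module L_τ := U(𝔤) ⊗_{U(𝔮)} τ is a semisimple 𝔨-module and dim_ℂ Hom_𝔨(τ, L_τ) = 1. Then V is irreducible as a 𝔤-module. -/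

import Mathlib

universe u v

/-- ULift of a Lie module is a Lie module. -/
instance uliftLieRingModule {𝔤 : Type*} [LieRing 𝔤] {V : Type*} [AddCommGroup V]
    [LieRingModule 𝔤 V] : LieRingModule 𝔤 (ULift.{u} V) where
  bracket X v := ULift.up ⁅X, v.down⁆
  add_lie X Y v := congrArg ULift.up (add_lie X Y v.down)
  lie_add X v w := congrArg ULift.up (lie_add X v.down w.down)
  leibniz_lie X Y v := congrArg ULift.up (leibniz_lie X Y v.down)

@[simp] lemma ulift_lie_down {𝔤 : Type*} [LieRing 𝔤] {V : Type*} [AddCommGroup V]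
    [LieRingModule 𝔤 V] (X : 𝔤) (v : ULift.{u} V) :
    (⁅X, v⁆ : ULift.{u} V).down = ⁅X, v.down⁆ := rfl

instance uliftLieModule {𝔤 : Type*} [LieRing 𝔤] [LieAlgebra ℂ 𝔤] {V : Type*} [AddCommGroup V]
    [Module ℂ V] [LieRingModule 𝔤 V] [LieModule ℂ 𝔤 V] : LieModule ℂ 𝔤 (ULift.{u} V) where
  smul_lie c X v := congrArg ULift.up (smul_lie c X v.down)
  lie_smul c X v := congrArg ULift.up (lie_smul c X v.down)

/-- A submodule stable under a family of operators, inside a module which is a sum of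
irreducible stable submodules, has a stable complement. -/
theorem exists_stable_compl {K : Type*} {L : Type*} [AddCommGroup L] [Module ℂ L]
    (act : K → L →ₗ[ℂ] L) {I : Type*} (C : I → Submodule ℂ L)
    (hC : ∀ i, (∀ k, ∀ w ∈ C i, act k w ∈ C i) ∧
      ∀ W ≤ C i, (∀ k, ∀ w ∈ W, act k w ∈ W) → W = ⊥ ∨ W = C i)
    (hsupC : iSup C = ⊤)
    (N : Submodule ℂ L) (hN : ∀ k, ∀ w ∈ N, act k w ∈ N) :
    ∃ S : Submodule ℂ L, (∀ k, ∀ w ∈ S, act k w ∈ S) ∧ IsCompl N S := by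
  set s : Set (Submodule ℂ L) :=
    {S | (∀ k, ∀ w ∈ S, act k w ∈ S) ∧ S ⊓ N = ⊥} with hs
  obtain ⟨S, hSmem, hSmax⟩ : ∃ S, Maximal (· ∈ s) S := by
    apply zorn_le₀
    intro c hcs hchain
    rcases c.eq_empty_or_nonempty with rfl | hne
    · exact ⟨⊥, ⟨fun k w hw => by simp_all, bot_inf_eq N⟩, by simp⟩
    · refine ⟨sSup c, ⟨?_, ?_⟩, fun z hz => le_sSup hz⟩
      · intro k w hw
        obtain ⟨T, hTc, hwT⟩ := (Submodule.mem_sSup_of_directed hne hchain.directedOn).mp hw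
        exact le_sSup hTc ((hcs hTc).1 k w hwT)
      · rw [eq_bot_iff]
        intro x hx
        obtain ⟨T, hTc, hxT⟩ :=
          (Submodule.mem_sSup_of_directed hne hchain.directedOn).mp hx.1
        have : x ∈ T ⊓ N := ⟨hxT, hx.2⟩
        rw [(hcs hTc).2] at this
        exact this
  refine ⟨S, hSmem.1, ?_, ?_⟩
  · rw [disjoint_iff, inf_comm]; exact hSmem.2
  · rw [codisjoint_iff, eq_top_iff, ← hsupC]
    apply iSup_le
    intro i
    by_contra hni
    -- C i ⊓ (N ⊔ S) is stable and ≠ C i, so it is ⊥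
    have hNSstab : ∀ k, ∀ w ∈ N ⊔ S, act k w ∈ N ⊔ S := by
      intro k w hw
      obtain ⟨a, ha, b, hb, rfl⟩ := Submodule.mem_sup.mp hw
      rw [map_add]
      exact Submodule.add_mem _ (Submodule.mem_sup_left (hN k a ha))
        (Submodule.mem_sup_right (hSmem.1 k b hb))
    have hD : C i ⊓ (N ⊔ S) = ⊥ := by
      rcases (hC i).2 (C i ⊓ (N ⊔ S)) inf_le_left
        (fun k w hw => ⟨(hC i).1 k w hw.1, hNSstab k w hw.2⟩) with h | h
      · exact h
      · exact absurd (h ▸ inf_le_right) hni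
    -- then S ⊔ C i is in s, contradicting maximality
    have hS' : S ⊔ C i ∈ s := by
      refine ⟨fun k w hw => ?_, ?_⟩
      · obtain ⟨a, ha, b, hb, rfl⟩ := Submodule.mem_sup.mp hw
        rw [map_add]
        exact Submodule.add_mem _ (Submodule.mem_sup_left (hSmem.1 k a ha))
          (Submodule.mem_sup_right ((hC i).1 k b hb))
      · rw [eq_bot_iff]
        rintro x ⟨hx1, hx2⟩
        obtain ⟨a, ha, b, hb, rfl⟩ := Submodule.mem_sup.mp hx1
        have hbmem : b ∈ C i ⊓ (N ⊔ S) := by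
          refine ⟨hb, ?_⟩
          rw [← add_sub_cancel_left a b]
          exact Submodule.sub_mem _ (Submodule.mem_sup_left hx2)
            (Submodule.mem_sup_right ha)
        rw [hD] at hbmem
        rw [(Submodule.mem_bot ℂ).mp hbmem, add_zero] at hx2 ⊢
        have : a ∈ S ⊓ N := ⟨ha, hx2⟩
        rw [hSmem.2] at this
        exact this
    have : C i ≤ S := le_trans le_sup_right (hSmax hS' le_sup_left)
    exact hni (le_trans this le_sup_right)

/-- Let `𝔤 = 𝔭⁺ ⊕ 𝔨 ⊕ 𝔭⁻` be a Lie algebra over ℂ with `[𝔨,𝔭^±] ⊆ 𝔭^±`, and let `V` be a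
`𝔤`-module in which every `𝔤`-submodule has a `𝔤`-submodule complement.  Let `v₀ ∈ V` be a
nonzero vector such that: (i) `V` is generated by `v₀` as a `𝔤`-module; (ii) the
`𝔨`-submodule `τ` of `V` generated by `v₀` is irreducible; (iii) `𝔭⁻·v₀ = 0`; (iv) the
induced module `L_τ = U(𝔤) ⊗_{U(𝔮)} τ` (with `𝔮 = 𝔨 ⊕ 𝔭⁻` acting on `τ` through `𝔨`,
`𝔭⁻` acting by zero) — characterized below by its universal property
`Hom_𝔤(L_τ, M) ≅ Hom_𝔮(τ, M)` — is a semisimple `𝔨`-module containing the `𝔨`-type `τ`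
exactly once, i.e. `dim_ℂ Hom_𝔨(τ, L_τ) = 1`.  Then `V` is irreducible as a `𝔤`-module. -/
theorem stmt_7 {𝔤 : Type u} [LieRing 𝔤] [LieAlgebra ℂ 𝔤]
    (𝔨 𝔭p 𝔭m : LieSubalgebra ℂ 𝔤)
    -- `𝔤 = 𝔭⁺ ⊕ 𝔨 ⊕ 𝔭⁻` as vector spaces:
    (hsup : (𝔭p : Submodule ℂ 𝔤) ⊔ (𝔨 : Submodule ℂ 𝔤) ⊔ (𝔭m : Submodule ℂ 𝔤) = ⊤)
    (hind₁ : (𝔭p : Submodule ℂ 𝔤) ⊓ ((𝔨 : Submodule ℂ 𝔤) ⊔ (𝔭m : Submodule ℂ 𝔤)) = ⊥)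
    (hind₂ : (𝔨 : Submodule ℂ 𝔤) ⊓ (𝔭m : Submodule ℂ 𝔤) = ⊥)
    (hkp : ∀ X ∈ 𝔨, ∀ Y ∈ 𝔭p, ⁅X, Y⁆ ∈ 𝔭p)
    (hkm : ∀ X ∈ 𝔨, ∀ Y ∈ 𝔭m, ⁅X, Y⁆ ∈ 𝔭m)
    {V : Type v} [AddCommGroup V] [Module ℂ V] [LieRingModule 𝔤 V] [LieModule ℂ 𝔤 V]
    -- every `𝔤`-submodule of `V` has a `𝔤`-submodule complement:
    (hcompl : ∀ W : Submodule ℂ V, (∀ X : 𝔤, ∀ w ∈ W, ⁅X, w⁆ ∈ W) →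
      ∃ W' : Submodule ℂ V, (∀ X : 𝔤, ∀ w ∈ W', ⁅X, w⁆ ∈ W') ∧ IsCompl W W')
    (v₀ : V) (hv₀ : v₀ ≠ 0)
    -- (i) `V` is generated by `v₀` as a `𝔤`-module:
    (hgen : ∀ W : Submodule ℂ V, v₀ ∈ W → (∀ X : 𝔤, ∀ w ∈ W, ⁅X, w⁆ ∈ W) → W = ⊤)
    -- `τ` is the `𝔨`-submodule of `V` generated by `v₀`:
    (τ : Submodule ℂ V) (hv₀τ : v₀ ∈ τ)
    (hτstab : ∀ X ∈ 𝔨, ∀ w ∈ τ, ⁅X, w⁆ ∈ τ)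
    (hτmin : ∀ W : Submodule ℂ V, v₀ ∈ W → (∀ X ∈ 𝔨, ∀ w ∈ W, ⁅X, w⁆ ∈ W) → τ ≤ W)
    -- (ii) `τ` is irreducible as a `𝔨`-module:
    (hτne : τ ≠ ⊥)
    (hτirr : ∀ W ≤ τ, (∀ X ∈ 𝔨, ∀ w ∈ W, ⁅X, w⁆ ∈ W) → W = ⊥ ∨ W = τ)
    -- (iii) `𝔭⁻ · v₀ = 0`:
    (hann : ∀ Y ∈ 𝔭m, ⁅Y, v₀⁆ = 0)
    -- `L` is the induced `𝔤`-module `L_τ = U(𝔤) ⊗_{U(𝔮)} τ`; `ι : τ → L_τ`, `t ↦ 1 ⊗ t`,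
    -- is `𝔨`-equivariant, `𝔭⁻` kills `ι(τ)`, and `(L, ι)` has the universal property
    -- `Hom_𝔤(L_τ, M) ≅ Hom_𝔮(τ, M)` characterizing the induced module:
    (L : Type (max u v)) [AddCommGroup L] [Module ℂ L] [LieRingModule 𝔤 L] [LieModule ℂ 𝔤 L]
    (ι : τ →ₗ[ℂ] L)
    (hιeq : ∀ (X : 𝔤) (hX : X ∈ 𝔨) (t : τ),
      ι ⟨⁅X, (t : V)⁆, hτstab X hX (t : V) t.2⟩ = ⁅X, ι t⁆)
    (hιann : ∀ Y ∈ 𝔭m, ∀ t : τ, ⁅Y, ι t⁆ = 0)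
    (huniv : ∀ (M : Type (max u v)) [AddCommGroup M] [Module ℂ M]
        [LieRingModule 𝔤 M] [LieModule ℂ 𝔤 M],
      ∀ f : τ →ₗ[ℂ] M,
        (∀ (X : 𝔤) (hX : X ∈ 𝔨) (t : τ),
          f ⟨⁅X, (t : V)⁆, hτstab X hX (t : V) t.2⟩ = ⁅X, f t⁆) →
        (∀ Y ∈ 𝔭m, ∀ t : τ, ⁅Y, f t⁆ = 0) →
        ∃! F : L →ₗ[ℂ] M, (∀ (X : 𝔤) (x : L), F ⁅X, x⁆ = ⁅X, F x⁆) ∧ F ∘ₗ ι = f)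
    -- (iv) `L_τ` is a semisimple `𝔨`-module (a sum of irreducible `𝔨`-submodules) ...
    (hss : ∃ (I : Type (max u v)) (C : I → Submodule ℂ L),
      (∀ i, (∀ X ∈ 𝔨, ∀ w ∈ C i, ⁅X, w⁆ ∈ C i) ∧ C i ≠ ⊥ ∧
        ∀ W ≤ C i, (∀ X ∈ 𝔨, ∀ w ∈ W, ⁅X, w⁆ ∈ W) → W = ⊥ ∨ W = C i) ∧
      iSup C = ⊤)
    -- ... and `dim_ℂ Hom_𝔨(τ, L_τ) = 1`:
    (hmult : ∃ f₀ : τ →ₗ[ℂ] L, f₀ ≠ 0 ∧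
      (∀ (X : 𝔤) (hX : X ∈ 𝔨) (t : τ),
        f₀ ⟨⁅X, (t : V)⁆, hτstab X hX (t : V) t.2⟩ = ⁅X, f₀ t⁆) ∧
      ∀ f : τ →ₗ[ℂ] L,
        (∀ (X : 𝔤) (hX : X ∈ 𝔨) (t : τ),
          f ⟨⁅X, (t : V)⁆, hτstab X hX (t : V) t.2⟩ = ⁅X, f t⁆) →
        ∃ c : ℂ, f = c • f₀) :
    -- conclusion: `V` is irreducible as a `𝔤`-module
    ∀ W : Submodule ℂ V, (∀ X : 𝔤, ∀ w ∈ W, ⁅X, w⁆ ∈ W) → W = ⊥ ∨ W = ⊤ := by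
  intro W hW
  by_contra hcon
  push_neg at hcon
  obtain ⟨hWbot, hWtop⟩ := hcon
  -- complement of W
  obtain ⟨W', hW'stab, hWW'⟩ := hcompl W hW
  have hv₀W : v₀ ∉ W := fun h => hWtop (hgen W h hW)
  have hv₀W' : v₀ ∉ W' := by
    intro h
    have hWt : W' = ⊤ := hgen W' h hW'stab
    apply hWbot
    have := hWW'.disjoint
    rw [disjoint_iff, hWt, inf_top_eq] at this
    exact this
  -- 𝔭⁻ kills τ
  have hτann : ∀ Y ∈ 𝔭m, ∀ t : τ, ⁅Y, (t : V)⁆ = 0 := by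
    set W₀ : Submodule ℂ V :=
      { carrier := {w | ∀ Y ∈ 𝔭m, ⁅Y, w⁆ = 0}
        add_mem' := fun ha hb Y hY => by rw [lie_add, ha Y hY, hb Y hY, add_zero]
        zero_mem' := fun Y hY => lie_zero Y
        smul_mem' := fun c a ha Y hY => by rw [lie_smul, ha Y hY, smul_zero] } with hW₀
    have hstab : ∀ X ∈ 𝔨, ∀ w ∈ W₀, ⁅X, w⁆ ∈ W₀ := by
      intro X hX w hw Y hY
      have h1 : ⁅Y, ⁅X, w⁆⁆ = ⁅⁅Y, X⁆, w⁆ + ⁅X, ⁅Y, w⁆⁆ := leibniz_lie Y X w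
      have hYX : ⁅Y, X⁆ ∈ 𝔭m := (lie_skew Y X) ▸ neg_mem (hkm X hX Y hY)
      rw [hw Y hY, lie_zero, add_zero, hw ⁅Y, X⁆ hYX] at h1
      exact h1
    have hle : τ ≤ W₀ := hτmin W₀ hann hstab
    exact fun Y hY t => hle t.2 Y hY
  -- construct the 𝔤-map F : L → V via the universal property, through ULift
  have hj1 : ∀ (X : 𝔤) (hX : X ∈ 𝔨) (t : τ),
      ((ULift.moduleEquiv.symm.toLinearMap ∘ₗ τ.subtype : τ →ₗ[ℂ] ULift.{u} V)
        ⟨⁅X, (t : V)⁆, hτstab X hX (t : V) t.2⟩) = ⁅X,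
        (ULift.moduleEquiv.symm.toLinearMap ∘ₗ τ.subtype : τ →ₗ[ℂ] ULift.{u} V) t⁆ := by
    intro X hX t
    apply ULift.down_injective
    rfl
  have hj2 : ∀ Y ∈ 𝔭m, ∀ t : τ,
      ⁅Y, (ULift.moduleEquiv.symm.toLinearMap ∘ₗ τ.subtype : τ →ₗ[ℂ] ULift.{u} V) t⁆ = 0 := by
    intro Y hY t
    apply ULift.down_injective
    exact hτann Y hY t
  obtain ⟨F₀, ⟨hF₀lie, hF₀ι⟩, -⟩ :=
    huniv (ULift.{u} V) (ULift.moduleEquiv.symm.toLinearMap ∘ₗ τ.subtype) hj1 hj2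
  set F : L →ₗ[ℂ] V := ULift.moduleEquiv.toLinearMap ∘ₗ F₀ with hF
  have hFlie : ∀ (X : 𝔤) (x : L), F ⁅X, x⁆ = ⁅X, F x⁆ := by
    intro X x
    show (F₀ ⁅X, x⁆).down = ⁅X, (F₀ x).down⁆
    rw [hF₀lie]
    rfl
  have hFι : ∀ t : τ, F (ι t) = (t : V) := by
    intro t
    have h := LinearMap.congr_fun hF₀ι t
    rw [LinearMap.comp_apply] at h
    show (F₀ (ι t)).down = (t : V)
    rw [h]
    rfl
  -- F is surjective
  have hrange : LinearMap.range F = ⊤ := by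
    apply hgen
    · exact ⟨ι ⟨v₀, hv₀τ⟩, hFι ⟨v₀, hv₀τ⟩⟩
    · rintro X w ⟨x, rfl⟩
      exact ⟨⁅X, x⁆, hFlie X x⟩
  -- ker F has a 𝔨-stable complement S
  obtain ⟨I, C, hC, hCsup⟩ := hss
  obtain ⟨S, hSstab, hNS⟩ :=
    exists_stable_compl (fun k : 𝔨 => LieModule.toEnd ℂ 𝔤 L (k : 𝔤)) C
      (fun i => ⟨fun k w hw => by
          simpa using (hC i).1 (k : 𝔤) k.2 w hw,
        fun Wi hWi hWistab => (hC i).2.2 Wi hWi (fun X hX w hw => by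
          simpa using hWistab ⟨X, hX⟩ w hw)⟩)
      hCsup (LinearMap.ker F)
      (fun k w hw => by
        simp only [LieModule.toEnd_apply_apply, LinearMap.mem_ker] at hw ⊢
        rw [hFlie, hw, lie_zero])
  have hSstab' : ∀ X ∈ 𝔨, ∀ w ∈ S, ⁅X, w⁆ ∈ S := fun X hX w hw => by
    simpa using hSstab ⟨X, hX⟩ w hw
  -- F restricted to S is a bijection onto V
  set Fr : S →ₗ[ℂ] V := F ∘ₗ S.subtype with hFr
  have hSinj : ∀ a b : L, a ∈ S → b ∈ S → F a = F b → a = b := by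
    intro a b ha hb hab
    have hmem : a - b ∈ LinearMap.ker F ⊓ S :=
      Submodule.mem_inf.mpr
        ⟨LinearMap.mem_ker.mpr (by rw [map_sub, hab, sub_self]), Submodule.sub_mem S ha hb⟩
    rw [disjoint_iff.mp hNS.disjoint] at hmem
    have := (Submodule.mem_bot ℂ).mp hmem
    exact sub_eq_zero.mp this
  have hFrbij : Function.Bijective Fr := by
    constructor
    · intro a b hab
      exact Subtype.ext (hSinj a b a.2 b.2 hab)
    · intro v
      have hv : v ∈ LinearMap.range F := by rw [hrange]; trivial
      obtain ⟨x, hx⟩ := hv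
      have hxmem : x ∈ LinearMap.ker F ⊔ S := by
        rw [hNS.codisjoint.eq_top]; trivial
      obtain ⟨n, hn, s2, hs2, rfl⟩ := Submodule.mem_sup.mp hxmem
      refine ⟨⟨s2, hs2⟩, ?_⟩
      show F s2 = v
      rw [← hx, map_add, LinearMap.mem_ker.mp hn, zero_add]
  set e : S ≃ₗ[ℂ] V := LinearEquiv.ofBijective Fr hFrbij with he
  set σ : V →ₗ[ℂ] L := S.subtype ∘ₗ e.symm.toLinearMap with hσ
  have hσS : ∀ v : V, σ v ∈ S := fun v => (e.symm v).2
  have hFσ : ∀ v : V, F (σ v) = v := by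
    intro v
    have h1 : e (e.symm v) = v := e.apply_symm_apply v
    rw [LinearEquiv.ofBijective_apply] at h1
    exact h1
  have hσeq : ∀ X ∈ 𝔨, ∀ v : V, σ ⁅X, v⁆ = ⁅X, σ v⁆ := by
    intro X hX v
    apply hSinj _ _ (hσS _) (hSstab' X hX _ (hσS v))
    rw [hFσ, hFlie, hFσ]
  -- the 𝔤-equivariant projection p onto W along W'
  set pr := W.linearProjOfIsCompl W' hWW' with hpr
  set p : V →ₗ[ℂ] V := W.subtype ∘ₗ pr with hp
  have hpW : ∀ w ∈ W, p w = w := fun w hw =>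
    congrArg Subtype.val (Submodule.linearProjOfIsCompl_apply_left hWW' ⟨w, hw⟩)
  have hpW' : ∀ w ∈ W', p w = 0 := fun w hw =>
    congrArg Subtype.val (Submodule.linearProjOfIsCompl_apply_right hWW' ⟨w, hw⟩)
  have hpmem : ∀ v : V, p v ∈ W := fun v => (pr v).2
  have hdecomp : ∀ v : V, ∃ a ∈ W, ∃ b ∈ W', a + b = v := by
    intro v
    apply Submodule.mem_sup.mp
    rw [hWW'.codisjoint.eq_top]
    trivial
  have hpeq : ∀ (X : 𝔤) (v : V), p ⁅X, v⁆ = ⁅X, p v⁆ := by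
    intro X v
    obtain ⟨a, ha, b, hb, hab⟩ := hdecomp v
    have h1 : p v = a := by
      rw [← hab, map_add, hpW a ha, hpW' b hb, add_zero]
    have h2 : p ⁅X, v⁆ = ⁅X, a⁆ := by
      rw [← hab, lie_add, map_add, hpW _ (hW X a ha), hpW' _ (hW'stab X b hb), add_zero]
    rw [h2, h1]
  -- two 𝔨-equivariant maps τ → L
  obtain ⟨f₀, -, -, hf⟩ := hmult
  obtain ⟨c₁, hc1⟩ := hf (σ ∘ₗ (p ∘ₗ τ.subtype)) (by
    intro X hX t
    show σ (p ⁅X, (t : V)⁆) = ⁅X, σ (p (t : V))⁆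
    rw [hpeq, hσeq X hX])
  obtain ⟨c₂, hc2⟩ := hf (σ ∘ₗ τ.subtype) (by
    intro X hX t
    show σ ⁅X, (t : V)⁆ = ⁅X, σ (t : V)⁆
    rw [hσeq X hX])
  set t₀ : τ := ⟨v₀, hv₀τ⟩ with ht₀
  have e2 : v₀ = c₂ • F (f₀ t₀) := by
    have h := LinearMap.congr_fun hc2 t₀
    have h2 : σ v₀ = c₂ • f₀ t₀ := h
    calc v₀ = F (σ v₀) := (hFσ v₀).symm
    _ = F (c₂ • f₀ t₀) := by rw [h2]
    _ = c₂ • F (f₀ t₀) := map_smul F c₂ _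
  have e1 : p v₀ = c₁ • F (f₀ t₀) := by
    have h := LinearMap.congr_fun hc1 t₀
    have h2 : σ (p v₀) = c₁ • f₀ t₀ := h
    calc p v₀ = F (σ (p v₀)) := (hFσ _).symm
    _ = F (c₁ • f₀ t₀) := by rw [h2]
    _ = c₁ • F (f₀ t₀) := map_smul F c₁ _
  have hc₂ne : c₂ ≠ 0 := by
    intro h
    rw [h, zero_smul] at e2
    exact hv₀ e2
  by_cases hc₁ : c₁ = 0
  · -- p v₀ = 0, so v₀ ∈ W', contradiction
    rw [hc₁, zero_smul] at e1
    obtain ⟨a, ha, b, hb, hab⟩ := hdecomp v₀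
    have hpa : p v₀ = a := by
      rw [← hab, map_add, hpW a ha, hpW' b hb, add_zero]
    rw [e1] at hpa
    apply hv₀W'
    rw [← hab, ← hpa, zero_add]
    exact hb
  · -- v₀ is a multiple of p v₀ ∈ W, contradiction
    apply hv₀W
    have hFf : F (f₀ t₀) = c₂⁻¹ • v₀ := by
      rw [e2, smul_smul, inv_mul_cancel₀ hc₂ne, one_smul]
    have : v₀ = (c₂ * c₁⁻¹) • p v₀ := by
      rw [e1, hFf, smul_smul, smul_smul]
      field_simp
      rw [one_smul]
    rw [this]
    exact Submodule.smul_mem W _ (hpmem v₀)
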